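/- arXiv:2309.11682 — 2 statements merged into one kernel-verified Lean document; each statement's English description precedes it below -/
import Mathlib

section
/- Let m ≥ 1, let b ∈ ℝ^m satisfy b_i ≥ 0 for all i, and let ε ≥ 0. Then the value Σ_i b_i² + 2ε·(max_i b_i) + ε² is the maximum of Σ_i a_i² over all a ∈ ℝ^m with Σ_i |a_i − b_i| ≤ ε; that is, every such a satisfies Σ_i a_i² ≤ Σ_i b_i² + 2ε·(max_i b_i) + ε², and this value is attained by some feasible a (namely by adding ε to a largest coordinate of b). -/
/-- Theorem 1(a), vectorized form: the maximum of `∑ aᵢ²` over the ℓ1 ball of radius `ε`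
around a nonnegative vector `b` equals `∑ bᵢ² + 2ε·(maxᵢ bᵢ) + ε²`. -/
theorem l1_ball_sum_sq_max (m : ℕ) (hm : 1 ≤ m) (b : Fin m → ℝ)
    (hb : ∀ i, 0 ≤ b i) (ε : ℝ) (hε : 0 ≤ ε) :
    IsGreatest {S : ℝ | ∃ a : Fin m → ℝ, (∑ i, |a i - b i|) ≤ ε ∧ S = ∑ i, (a i) ^ 2}
      ((∑ i, (b i) ^ 2) +
        2 * ε * (Finset.univ.sup' (Finset.univ_nonempty_iff.mpr (Fin.pos_iff_nonempty.mp hm)) b)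
        + ε ^ 2) := by
  set ne : (Finset.univ : Finset (Fin m)).Nonempty :=
    Finset.univ_nonempty_iff.mpr (Fin.pos_iff_nonempty.mp hm)
  set M := Finset.univ.sup' ne b with hM
  obtain ⟨i0, _, hi0⟩ := Finset.exists_mem_eq_sup' ne b
  have hMnn : 0 ≤ M := le_trans (hb i0) (hi0 ▸ le_refl _)
  constructor
  · refine ⟨fun i => if i = i0 then b i + ε else b i, ?_, ?_⟩
    · have : ∀ i, |(if i = i0 then b i + ε else b i) - b i| = if i = i0 then ε else 0 := by
        intro i; split <;> simp [abs_of_nonneg hε]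
      simp only [this, Finset.sum_ite_eq', Finset.mem_univ, if_true, le_refl]
    · have : ∀ i, (if i = i0 then b i + ε else b i) ^ 2
          = b i ^ 2 + (if i = i0 then 2 * ε * b i + ε ^ 2 else 0) := by
        intro i; split <;> ring
      simp only [this, Finset.sum_add_distrib, Finset.sum_ite_eq', Finset.mem_univ, if_true]
      rw [hM, hi0]; ring
  · rintro S ⟨a, ha, rfl⟩
    have hd : ∀ i, 0 ≤ |a i - b i| := fun i => abs_nonneg _
    have hsum_nn : 0 ≤ ∑ i, |a i - b i| := Finset.sum_nonneg fun i _ => hd i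
    have key : ∀ i, a i ^ 2 ≤ b i ^ 2 + 2 * b i * |a i - b i| + |a i - b i| * (∑ j, |a j - b j|) := by
      intro i
      have h1 : a i ^ 2 = b i ^ 2 + 2 * b i * (a i - b i) + (a i - b i) ^ 2 := by ring
      have h2 : 2 * b i * (a i - b i) ≤ 2 * b i * |a i - b i| :=
        mul_le_mul_of_nonneg_left (le_abs_self _) (by linarith [hb i])
      have h3 : (a i - b i) ^ 2 ≤ |a i - b i| * (∑ j, |a j - b j|) := by
        have : (a i - b i) ^ 2 = |a i - b i| * |a i - b i| := by
          rw [← sq_abs]; ring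
        rw [this]
        exact mul_le_mul_of_nonneg_left
          (Finset.single_le_sum (fun j _ => hd j) (Finset.mem_univ i)) (hd i)
      linarith
    calc ∑ i, a i ^ 2
        ≤ ∑ i, (b i ^ 2 + 2 * b i * |a i - b i| + |a i - b i| * (∑ j, |a j - b j|)) :=
          Finset.sum_le_sum fun i _ => key i
      _ = (∑ i, b i ^ 2) + (∑ i, 2 * b i * |a i - b i|)
            + (∑ i, |a i - b i|) * (∑ j, |a j - b j|) := by
          rw [Finset.sum_add_distrib, Finset.sum_add_distrib, ← Finset.sum_mul]
      _ ≤ (∑ i, b i ^ 2) + 2 * ε * M + ε ^ 2 := by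
          have h1 : ∑ i, 2 * b i * |a i - b i| ≤ 2 * M * ε := by
            calc ∑ i, 2 * b i * |a i - b i| ≤ ∑ i, 2 * M * |a i - b i| := by
                  refine Finset.sum_le_sum fun i _ => ?_
                  exact mul_le_mul_of_nonneg_right
                    (by have := Finset.le_sup' b (Finset.mem_univ i); linarith) (hd i)
              _ = 2 * M * ∑ i, |a i - b i| := by rw [Finset.mul_sum]
              _ ≤ 2 * M * ε := mul_le_mul_of_nonneg_left ha (by linarith)
          have h2 : (∑ i, |a i - b i|) * (∑ j, |a j - b j|) ≤ ε ^ 2 := by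
            have := mul_le_mul ha ha hsum_nn hε
            nlinarith
          linarith
end

section
/- Let m ≥ 2, let b ∈ ℝ^m satisfy 1 = b_0 ≥ b_1 ≥ ⋯ ≥ b_{m−1} ≥ 0, and let ε ≥ 0. Then the maximum of Σ_i a_i² over all a ∈ ℝ^m with a_0 = 1 and Σ_i |a_i − b_i| ≤ ε equals Σ_i b_i² + 2ε·b_1 + ε²; i.e., every such a satisfies Σ_i a_i² ≤ Σ_i b_i² + 2ε·b_1 + ε², and this value is attained (by adding ε to the second-largest coordinate b_1). -/
/-- Theorem 1(a) of the paper: with the largest coordinate fixed to `1` (the top singular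
value of `Q`), the maximum of `∑ aᵢ²` over the ℓ1 ball of radius `ε` around `b`, subject to
`a₀ = 1`, equals `∑ bᵢ² + 2ε·b₁ + ε²` (ERMI + 2ε·HGR + ε²). -/
theorem l1_ball_sum_sq_max_top_fixed (m : ℕ) (hm : 2 ≤ m) (b : Fin m → ℝ)
    (hb0 : b ⟨0, by omega⟩ = 1) (hmono : Antitone b) (hbnn : ∀ i, 0 ≤ b i)
    (ε : ℝ) (hε : 0 ≤ ε) :
    IsGreatest
      {S : ℝ | ∃ a : Fin m → ℝ,
        a ⟨0, by omega⟩ = 1 ∧ (∑ i, |a i - b i|) ≤ ε ∧ S = ∑ i, (a i) ^ 2}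
      ((∑ i, (b i) ^ 2) + 2 * ε * b ⟨1, by omega⟩ + ε ^ 2) := by
  have h0m : 0 < m := by omega
  have h1m : 1 < m := by omega
  set i0 : Fin m := ⟨0, h0m⟩ with hi0
  set i1 : Fin m := ⟨1, h1m⟩ with hi1
  have hne : i0 ≠ i1 := by simp [hi0, hi1, Fin.ext_iff]
  constructor
  · refine ⟨fun i => if i = i1 then b i + ε else b i, ?_, ?_, ?_⟩
    · simp only [if_neg hne]
      exact hb0
    · have key : ∀ i : Fin m, |(if i = i1 then b i + ε else b i) - b i|
          = if i = i1 then ε else 0 := by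
        intro i
        split <;> simp [abs_of_nonneg hε]
      simp [key, Finset.sum_ite_eq']
    · have key : ∀ i : Fin m, (if i = i1 then b i + ε else b i) ^ 2
          = b i ^ 2 + (if i = i1 then 2 * ε * b i1 + ε ^ 2 else 0) := by
        intro i
        split_ifs with h
        · subst h; ring
        · ring
      simp only [key, Finset.sum_add_distrib, Finset.sum_ite_eq', Finset.mem_univ, if_true]
      ring
  · rintro S ⟨a, ha0, hsum, rfl⟩
    set d : Fin m → ℝ := fun i => a i - b i with hd
    have hd0 : d i0 = 0 := by simp [hd, ha0, hb0]
    have hsum' : ∑ i, |d i| ≤ ε := hsum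
    have hDnn : 0 ≤ ∑ i, |d i| := Finset.sum_nonneg fun i _ => abs_nonneg _
    have hb1nn : 0 ≤ b i1 := hbnn i1
    have expand : ∑ i, a i ^ 2 = ∑ i, b i ^ 2 + ∑ i, 2 * b i * d i + ∑ i, d i ^ 2 := by
      rw [← Finset.sum_add_distrib, ← Finset.sum_add_distrib]
      exact Finset.sum_congr rfl fun i _ => by simp only [hd]; ring
    have h1 : ∑ i, 2 * b i * d i ≤ 2 * ε * b i1 := by
      calc ∑ i, 2 * b i * d i ≤ ∑ i, 2 * b i1 * |d i| := by
            apply Finset.sum_le_sum; intro i _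
            by_cases h : i = i0
            · subst h; simp [hd0]
            · have h1i : i1 ≤ i := by
                have : i.val ≠ 0 := fun hh => h (Fin.ext hh)
                exact Fin.mk_le_mk.mpr (by omega)
              have hble : b i ≤ b i1 := hmono h1i
              have hbinn : 0 ≤ b i := hbnn i
              calc 2 * b i * d i ≤ 2 * b i * |d i| := by
                    apply mul_le_mul_of_nonneg_left (le_abs_self _); positivity
                _ ≤ 2 * b i1 * |d i| :=
                    mul_le_mul_of_nonneg_right (by linarith) (abs_nonneg _)
        _ = 2 * b i1 * ∑ i, |d i| := by rw [Finset.mul_sum]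
        _ ≤ 2 * b i1 * ε := mul_le_mul_of_nonneg_left hsum' (by positivity)
        _ = 2 * ε * b i1 := by ring
    have h2 : ∑ i, d i ^ 2 ≤ ε ^ 2 := by
      have step : ∑ i, d i ^ 2 ≤ (∑ i, |d i|) ^ 2 := by
        calc ∑ i, d i ^ 2 ≤ ∑ i, |d i| * ∑ j, |d j| := by
              apply Finset.sum_le_sum; intro i _
              rw [← sq_abs]
              have : |d i| ≤ ∑ j, |d j| :=
                Finset.single_le_sum (fun j _ => abs_nonneg (d j)) (Finset.mem_univ i)
              nlinarith [abs_nonneg (d i)]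
          _ = (∑ i, |d i|) ^ 2 := by rw [← Finset.sum_mul]; ring
      nlinarith
    linarith
end
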